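/- Let T ≥ 1 be a natural number, let B ≥ 0, and let h_1, …, h_T, h_{T+1} be vectors in ℝ^d with ‖h_t‖ ≤ B for every t ∈ {1, …, T+1}. Define the empirical covariance Σ = (1/T)·∑_{t=1}^T (h_t − h̄)(h_t − h̄)ᵀ with h̄ = (1/T)·∑_{t=1}^T h_t, and let Σ' be the analogous covariance over all T+1 vectors with mean h̄'. Then ‖Σ' − Σ‖_F ≤ 6B²/(T+1). -/

import Mathlib

/-- The outer product `a bᵀ` of two vectors in `ℝ^d`, as a `d × d` matrix. -/
def outerProd {d : ℕ} (a b : EuclideanSpace ℝ (Fin d)) :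
    Matrix (Fin d) (Fin d) ℝ :=
  Matrix.of fun i j => a i * b j

/-- The Frobenius norm of a `d × d` real matrix. -/
noncomputable def frobNorm {d : ℕ} (M : Matrix (Fin d) (Fin d) ℝ) : ℝ :=
  Real.sqrt (∑ i, ∑ j, (M i j) ^ 2)

/-- The empirical covariance `(1/T)·∑_{t=1}^T (h_t − h̄)(h_t − h̄)ᵀ` of the
vectors `h 1, …, h T`. -/
noncomputable def empCov {d : ℕ} (T : ℕ) (h : ℕ → EuclideanSpace ℝ (Fin d)) :
    Matrix (Fin d) (Fin d) ℝ :=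
  (T : ℝ)⁻¹ • ∑ t ∈ Finset.Icc 1 T,
    outerProd (h t - (T : ℝ)⁻¹ • ∑ s ∈ Finset.Icc 1 T, h s)
      (h t - (T : ℝ)⁻¹ • ∑ s ∈ Finset.Icc 1 T, h s)

attribute [local instance] Matrix.frobeniusNormedAddCommGroup Matrix.frobeniusNormedSpace

section Aux

variable {d : ℕ}

lemma frobNorm_eq_norm (M : Matrix (Fin d) (Fin d) ℝ) : frobNorm M = ‖M‖ := by
  rw [Matrix.frobenius_norm_def, frobNorm, Real.sqrt_eq_rpow]
  congr 1
  refine Finset.sum_congr rfl fun i _ => Finset.sum_congr rfl fun j _ => ?_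
  rw [Real.norm_eq_abs, show ((2:ℝ) = ((2:ℕ):ℝ)) by norm_num, Real.rpow_natCast, sq_abs]

lemma norm_outer (a b : EuclideanSpace ℝ (Fin d)) : ‖outerProd a b‖ = ‖a‖ * ‖b‖ := by
  rw [← frobNorm_eq_norm, frobNorm, EuclideanSpace.norm_eq, EuclideanSpace.norm_eq,
    ← Real.sqrt_mul (by positivity)]
  congr 1
  simp only [outerProd, Matrix.of_apply, mul_pow, Real.norm_eq_abs, sq_abs,
    Finset.sum_mul, Finset.mul_sum]
  rw [Finset.sum_comm]

lemma outer_sub_left (a b c : EuclideanSpace ℝ (Fin d)) :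
    outerProd (a - b) c = outerProd a c - outerProd b c := by
  ext i j
  simp [outerProd, sub_mul]

lemma outer_sub_right (a b c : EuclideanSpace ℝ (Fin d)) :
    outerProd a (b - c) = outerProd a b - outerProd a c := by
  ext i j
  simp [outerProd, mul_sub]

/-- Norm bound for a sum over `Icc 1 T`. -/
lemma sum_Icc_norm_le {E : Type*} [SeminormedAddCommGroup E]
    (T : ℕ) (C : ℝ) (f : ℕ → E) (hf : ∀ t ∈ Finset.Icc 1 T, ‖f t‖ ≤ C) :
    ‖∑ t ∈ Finset.Icc 1 T, f t‖ ≤ T * C := by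
  calc ‖∑ t ∈ Finset.Icc 1 T, f t‖ ≤ ∑ t ∈ Finset.Icc 1 T, ‖f t‖ := norm_sum_le _ _
    _ ≤ ∑ _t ∈ Finset.Icc 1 T, C := Finset.sum_le_sum hf
    _ = T * C := by simp [Nat.card_Icc]

/-- The key quantitative lemma: shifting a `1/T`-average to a `1/(T+1)`-average
with one extra term of norm at most `C` moves it by at most `2C/(T+1)`. -/
lemma shift_norm_le {E : Type*} [SeminormedAddCommGroup E] [NormedSpace ℝ E]
    (T : ℕ) (hT : 1 ≤ T) (C : ℝ) (hC : 0 ≤ C) (A a : E)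
    (hA : ‖A‖ ≤ T * C) (ha : ‖a‖ ≤ C) :
    ‖((T : ℝ) + 1)⁻¹ • (A + a) - (T : ℝ)⁻¹ • A‖ ≤ 2 * C / ((T : ℝ) + 1) := by
  have hT0 : (0:ℝ) < T := by exact_mod_cast hT
  have hT1 : (0:ℝ) < (T:ℝ) + 1 := by linarith
  have key : ((T : ℝ) + 1)⁻¹ • (A + a) - (T : ℝ)⁻¹ • A
      = (((T : ℝ) + 1)⁻¹ - (T : ℝ)⁻¹) • A + ((T : ℝ) + 1)⁻¹ • a := by
    rw [smul_add, sub_smul]; abel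
  rw [key]
  have habs : |((T : ℝ) + 1)⁻¹ - (T : ℝ)⁻¹| = (T : ℝ)⁻¹ - ((T : ℝ) + 1)⁻¹ := by
    rw [abs_of_nonpos (by rw [sub_nonpos]; exact inv_anti₀ hT0 (by linarith))]
    ring
  calc ‖(((T : ℝ) + 1)⁻¹ - (T : ℝ)⁻¹) • A + ((T : ℝ) + 1)⁻¹ • a‖
      ≤ ‖(((T : ℝ) + 1)⁻¹ - (T : ℝ)⁻¹) • A‖ + ‖((T : ℝ) + 1)⁻¹ • a‖ := norm_add_le _ _
    _ = ((T : ℝ)⁻¹ - ((T : ℝ) + 1)⁻¹) * ‖A‖ + ((T : ℝ) + 1)⁻¹ * ‖a‖ := by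
        rw [norm_smul, norm_smul, Real.norm_eq_abs, Real.norm_eq_abs, habs,
          abs_of_pos (by positivity)]
    _ ≤ ((T : ℝ)⁻¹ - ((T : ℝ) + 1)⁻¹) * ((T : ℝ) * C) + ((T : ℝ) + 1)⁻¹ * C := by
        have h1 : (0:ℝ) ≤ (T : ℝ)⁻¹ - ((T : ℝ) + 1)⁻¹ := by
          rw [sub_nonneg]; exact inv_anti₀ hT0 (by linarith)
        gcongr
    _ = 2 * C / ((T : ℝ) + 1) := by field_simp; ring

lemma sum_coord (s : Finset ℕ) (f : ℕ → EuclideanSpace ℝ (Fin d)) (i : Fin d) :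
    (∑ t ∈ s, f t) i = ∑ t ∈ s, f t i := by
  classical
  induction s using Finset.induction_on with
  | empty => simp
  | insert _ _ hnot ih => rw [Finset.sum_insert hnot, Finset.sum_insert hnot, PiLp.add_apply, ih]

/-- Decomposition of the empirical covariance: `Σ = M − h̄ h̄ᵀ`. -/
lemma empCov_eq (T : ℕ) (hT : 1 ≤ T) (h : ℕ → EuclideanSpace ℝ (Fin d)) :
    empCov T h = (T : ℝ)⁻¹ • ∑ t ∈ Finset.Icc 1 T, outerProd (h t) (h t)
      - outerProd ((T : ℝ)⁻¹ • ∑ s ∈ Finset.Icc 1 T, h s)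
          ((T : ℝ)⁻¹ • ∑ s ∈ Finset.Icc 1 T, h s) := by
  have hT0 : ((T : ℝ)) ≠ 0 := by
    have : (0:ℝ) < T := by exact_mod_cast hT
    linarith
  have hcard : (Finset.Icc 1 T).card = T := by simp [Nat.card_Icc]
  ext i j
  simp only [empCov, Matrix.sub_apply, Matrix.smul_apply, Matrix.sum_apply, outerProd,
    Matrix.of_apply, PiLp.sub_apply, PiLp.smul_apply, smul_eq_mul]
  simp only [sum_coord]
  set Si := ∑ s ∈ Finset.Icc 1 T, (h s) i with hSi
  set Sj := ∑ s ∈ Finset.Icc 1 T, (h s) j with hSj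
  have key : ∑ t ∈ Finset.Icc 1 T,
      ((h t) i - (T : ℝ)⁻¹ * Si) * ((h t) j - (T : ℝ)⁻¹ * Sj)
      = ∑ t ∈ Finset.Icc 1 T, (h t) i * (h t) j - (T : ℝ)⁻¹ * Si * Sj := by
    have expand : ∀ t ∈ Finset.Icc 1 T,
        ((h t) i - (T : ℝ)⁻¹ * Si) * ((h t) j - (T : ℝ)⁻¹ * Sj)
        = (h t) i * (h t) j - ((T : ℝ)⁻¹ * Sj) * (h t) i
            - ((T : ℝ)⁻¹ * Si) * (h t) j + ((T : ℝ)⁻¹ * Si) * ((T : ℝ)⁻¹ * Sj) :=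
      fun t _ => by ring
    rw [Finset.sum_congr rfl expand]
    rw [Finset.sum_add_distrib, Finset.sum_sub_distrib, Finset.sum_sub_distrib,
      ← Finset.mul_sum, ← Finset.mul_sum, Finset.sum_const, hcard, ← hSi, ← hSj]
    field_simp
    have hTT : (T : ℝ) ^ 2 * (T : ℝ)⁻¹ ^ 2 = 1 := by
      rw [← mul_pow, mul_inv_cancel₀ hT0, one_pow]
    linear_combination (Sj * Si) * hTT
  rw [key]
  field_simp

end Aux

/-- Corollary 1: appending one vector changes the empirical
covariance by at most `6B²/(T+1)` in Frobenius norm. -/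
theorem empCov_shift_le (d T : ℕ) (hT : 1 ≤ T) (B : ℝ) (hB : 0 ≤ B)
    (h : ℕ → EuclideanSpace ℝ (Fin d))
    (hbound : ∀ t ∈ Finset.Icc 1 (T + 1), ‖h t‖ ≤ B) :
    frobNorm (empCov (T + 1) h - empCov T h) ≤ 6 * B ^ 2 / ((T : ℝ) + 1) := by
  classical
  have hT0 : (0:ℝ) < T := by exact_mod_cast hT
  have hT1 : (0:ℝ) < (T : ℝ) + 1 := by linarith
  set S := Finset.Icc 1 T with hS
  have hins : Finset.Icc 1 (T + 1) = insert (T + 1) S := by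
    rw [hS]; exact (Finset.insert_Icc_right_eq_Icc_add_one (by omega)).symm
  have hnotmem : T + 1 ∉ S := by simp [hS]
  set A := ∑ t ∈ S, h t with hA'
  set P := ∑ t ∈ S, outerProd (h t) (h t) with hP'
  set a := h (T + 1) with ha'
  have hb : ∀ t ∈ S, ‖h t‖ ≤ B := fun t ht => hbound t (by
    rw [hins]; exact Finset.mem_insert_of_mem ht)
  have ha : ‖a‖ ≤ B := hbound (T + 1) (by simp)
  have hAb : ‖A‖ ≤ T * B := sum_Icc_norm_le T B h hb
  have hPb : ‖P‖ ≤ T * B ^ 2 := by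
    refine sum_Icc_norm_le T (B ^ 2) _ fun t ht => ?_
    rw [norm_outer, sq]
    exact mul_le_mul (hb t ht) (hb t ht) (norm_nonneg _) hB
  have haa : ‖outerProd a a‖ ≤ B ^ 2 := by
    rw [norm_outer, sq]
    exact mul_le_mul ha ha (norm_nonneg _) hB
  rw [frobNorm_eq_norm, empCov_eq T hT h, empCov_eq (T + 1) (by omega) h]
  have e1 : ∑ t ∈ Finset.Icc 1 (T + 1), outerProd (h t) (h t) = P + outerProd a a := by
    rw [hins, Finset.sum_insert hnotmem, ← ha', ← hP', add_comm]
  have e2 : ∑ s ∈ Finset.Icc 1 (T + 1), h s = A + a := by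
    rw [hins, Finset.sum_insert hnotmem, ← ha', ← hA', add_comm]
  rw [e1, e2]
  push_cast
  set μ : EuclideanSpace ℝ (Fin d) := (T : ℝ)⁻¹ • A with hμ'
  set ν : EuclideanSpace ℝ (Fin d) := ((T : ℝ) + 1)⁻¹ • (A + a) with hν'
  have hμb : ‖μ‖ ≤ B := by
    rw [hμ', norm_smul, Real.norm_eq_abs, abs_of_pos (by positivity)]
    calc (T : ℝ)⁻¹ * ‖A‖ ≤ (T : ℝ)⁻¹ * ((T : ℝ) * B) := by gcongr
      _ = B := by field_simp
  have hνb : ‖ν‖ ≤ B := by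
    rw [hν', norm_smul, Real.norm_eq_abs, abs_of_pos (by positivity)]
    have : ‖A + a‖ ≤ ((T : ℝ) + 1) * B := by
      calc ‖A + a‖ ≤ ‖A‖ + ‖a‖ := norm_add_le _ _
        _ ≤ (T : ℝ) * B + B := add_le_add hAb ha
        _ = ((T : ℝ) + 1) * B := by ring
    calc ((T : ℝ) + 1)⁻¹ * ‖A + a‖ ≤ ((T : ℝ) + 1)⁻¹ * (((T : ℝ) + 1) * B) := by gcongr
      _ = B := by field_simp
  have hdμ : ‖ν - μ‖ ≤ 2 * B / ((T : ℝ) + 1) :=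
    shift_norm_le T hT B hB A a hAb ha
  have hdM : ‖((T : ℝ) + 1)⁻¹ • (P + outerProd a a) - (T : ℝ)⁻¹ • P‖
      ≤ 2 * B ^ 2 / ((T : ℝ) + 1) :=
    shift_norm_le T hT (B ^ 2) (by positivity) P (outerProd a a) hPb haa
  have decomp : ((T : ℝ) + 1)⁻¹ • (P + outerProd a a) - outerProd ν ν
      - ((T : ℝ)⁻¹ • P - outerProd μ μ)
      = (((T : ℝ) + 1)⁻¹ • (P + outerProd a a) - (T : ℝ)⁻¹ • P)
        - (outerProd ν (ν - μ) + outerProd (ν - μ) μ) := by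
    rw [outer_sub_right, outer_sub_left]
    abel
  rw [decomp]
  have h1 : ‖outerProd ν (ν - μ)‖ ≤ B * (2 * B / ((T : ℝ) + 1)) := by
    rw [norm_outer]
    exact mul_le_mul hνb hdμ (norm_nonneg _) hB
  have h2 : ‖outerProd (ν - μ) μ‖ ≤ 2 * B / ((T : ℝ) + 1) * B := by
    rw [norm_outer]
    exact mul_le_mul hdμ hμb (norm_nonneg _) (by positivity)
  calc ‖(((T : ℝ) + 1)⁻¹ • (P + outerProd a a) - (T : ℝ)⁻¹ • P)
        - (outerProd ν (ν - μ) + outerProd (ν - μ) μ)‖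
      ≤ ‖((T : ℝ) + 1)⁻¹ • (P + outerProd a a) - (T : ℝ)⁻¹ • P‖
        + ‖outerProd ν (ν - μ) + outerProd (ν - μ) μ‖ := norm_sub_le _ _
    _ ≤ 2 * B ^ 2 / ((T : ℝ) + 1)
        + (‖outerProd ν (ν - μ)‖ + ‖outerProd (ν - μ) μ‖) :=
        add_le_add hdM (norm_add_le _ _)
    _ ≤ 2 * B ^ 2 / ((T : ℝ) + 1)
        + (B * (2 * B / ((T : ℝ) + 1)) + 2 * B / ((T : ℝ) + 1) * B) :=
        add_le_add le_rfl (add_le_add h1 h2)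
    _ = 6 * B ^ 2 / ((T : ℝ) + 1) := by field_simp; ring
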